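/- arXiv:1410.6210 — 2 statements merged into one kernel-verified Lean document; each statement's English description precedes it below -/
import Mathlib

section
/- Let q be a prime power with q ≡ 3 (mod 4), of characteristic p, let n be an integer with 3 ≤ n ≤ p, and let d_1, …, d_n be divisors of q−1 such that an odd number of the d_i are even. For any multiplicative characters χ_{d_1}, …, χ_{d_n} of 𝔽_q of orders exactly d_1, …, d_n respectively, one has S(χ_{d_n}, …, χ_{d_1}) = −S(χ_{d_1}, …, χ_{d_n}). -/
open Finset

/-- An element `g` of a finite field is primitive if it generates the multiplicative
group of nonzero elements, i.e. every nonzero element is a power of `g`. -/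
def IsPrimitiveElem {F : Type*} [Field F] (g : F) : Prop :=
  ∀ x : F, x ≠ 0 → ∃ k : ℕ, g ^ k = x

/-- The field `F` contains `n` consecutive distinct primitive elements: there is `g`
such that `g, g+1, …, g+n-1` are `n` distinct primitive elements. -/
def HasConsecutivePrimitives (F : Type*) [Field F] (n : ℕ) : Prop :=
  ∃ g : F, (∀ k : ℕ, k < n → IsPrimitiveElem (g + (k : F))) ∧
    ∀ i : ℕ, i < n → ∀ j : ℕ, j < n → g + (i : F) = g + (j : F) → i = j

/-- The character sum `S(χ⁽¹⁾, …, χ⁽ⁿ⁾) = ∑_{g ∈ F} χ⁽¹⁾(g) χ⁽²⁾(g+1) ⋯ χ⁽ⁿ⁾(g+n-1)`,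
where multiplicative characters are extended by `χ(0) = 0`. -/
noncomputable def Schar {F : Type*} [Field F] [Fintype F] {n : ℕ}
    (χ : Fin n → MulChar F ℂ) : ℂ :=
  ∑ g : F, ∏ k : Fin n, χ k (g + ((k : ℕ) : F))

/-- If the order of `χ` is even and `card F ≡ 3 mod 4`, then `χ(-1) = -1`. -/
lemma mulChar_neg_one_of_even {F : Type*} [Field F] [Fintype F]
    (hq4 : Fintype.card F % 4 = 3) (χ : MulChar F ℂ) (he : Even (orderOf χ)) :
    χ (-1) = -1 := by
  classical
  set c := Fintype.card F with hc
  obtain ⟨g, hg⟩ := IsCyclic.exists_monoid_generator (α := Fˣ)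
  have hordg : orderOf g = c - 1 := by
    rw [orderOf_eq_card_of_forall_mem_zpowers
      (fun x => mem_powers_iff_mem_zpowers.mp (hg x)),
      Nat.card_eq_fintype_card, Fintype.card_units]
  set k := (c - 1) / 2 with hk
  have h2k : 2 * k = c - 1 := by omega
  have hkodd : ¬ (2 ∣ k) := by omega
  have hkpos : 0 < k := by omega
  have hklt : k < c - 1 := by omega
  -- (g : F) ^ k = -1
  have hx2 : ((g : F) ^ k) * ((g : F) ^ k) = 1 := by
    rw [← pow_add, ← two_mul, h2k, ← hordg, ← Units.val_pow_eq_pow_val,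
      pow_orderOf_eq_one, Units.val_one]
  have hx1 : ((g : F) ^ k) ≠ 1 := by
    intro h
    have : g ^ k = 1 := Units.ext (by rwa [Units.val_pow_eq_pow_val, Units.val_one])
    have := orderOf_dvd_of_pow_eq_one this
    rw [hordg] at this
    exact absurd (Nat.le_of_dvd hkpos this) (by omega)
  have hgk : ((g : F) ^ k) = -1 := by
    rcases mul_self_eq_one_iff.mp hx2 with h | h
    · exact absurd h hx1
    · exact h
  -- orderOf (χ g) = orderOf χ
  have hord : orderOf (χ (g : F)) = orderOf χ := by
    rw [orderOf_eq_orderOf_iff]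
    intro m
    constructor
    · intro hm
      apply MulChar.ext
      intro x
      obtain ⟨r, hr⟩ := hg x
      rw [← hr, MulChar.pow_apply_coe, MulChar.one_apply_coe,
        Units.val_pow_eq_pow_val, map_pow, ← pow_mul, mul_comm, pow_mul, hm, one_pow]
    · intro hm
      have := congrArg (fun ψ : MulChar F ℂ => ψ (g : F)) hm
      simpa only [MulChar.pow_apply_coe, MulChar.one_apply_coe] using this
  -- χ(-1) squared is 1
  have hsq : χ (-1) * χ (-1) = 1 := by
    rw [← map_mul, neg_mul_neg, one_mul, map_one]
  rcases mul_self_eq_one_iff.mp hsq with h | h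
  · exfalso
    -- χ(-1) = 1 gives (χ g)^k = 1, so orderOf χ ∣ k, contradicting evenness
    have hζ : χ (g : F) ^ k = 1 := by rw [← map_pow, hgk, h]
    have hdvd : orderOf χ ∣ k := hord ▸ orderOf_dvd_of_pow_eq_one hζ
    obtain ⟨t, ht⟩ := he
    exact hkodd (dvd_trans ⟨t, by omega⟩ hdvd)
  · exact h

/-- If `q ≡ 3 (mod 4)` and an odd number of the `dᵢ` are even, then
`S(χ_{dₙ}, …, χ_{d₁}) = -S(χ_{d₁}, …, χ_{dₙ})`. -/
theorem Schar_reverse_neg (q p n : ℕ) (hq : IsPrimePow q) (hq4 : q % 4 = 3)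
    (F : Type*) [Field F] [Fintype F] (hF : Fintype.card F = q) (hp : CharP F p)
    (hn3 : 3 ≤ n) (hnp : n ≤ p) (d : Fin n → ℕ) (hd : ∀ k, d k ∣ q - 1)
    (hodd : Odd ((Finset.univ.filter (fun i : Fin n => Even (d i))).card))
    (χ : Fin n → MulChar F ℂ) (hχ : ∀ k, orderOf (χ k) = d k) :
    Schar (fun k => χ k.rev) = - Schar χ := by
  classical
  have hc : Fintype.card F % 4 = 3 := by rw [hF]; exact hq4
  have hn1 : 1 ≤ n := by omega
  -- value of χ j at -1
  have hval : ∀ j : Fin n, (χ j) (-1) = if Even (d j) then -1 else 1 := by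
    intro j
    by_cases h : Even (d j)
    · rw [if_pos h]
      exact mulChar_neg_one_of_even hc _ ((hχ j) ▸ h)
    · rw [if_neg h]
      refine MulChar.val_neg_one_eq_one_of_odd_order (Nat.not_even_iff_odd.mp h) ?_
      rw [← hχ j]; exact pow_orderOf_eq_one _
  have hprod : ∏ j : Fin n, (χ j) (-1) = -1 := by
    calc ∏ j : Fin n, (χ j) (-1)
        = ∏ j : Fin n, (if Even (d j) then (-1 : ℂ) else 1) :=
          Finset.prod_congr rfl (fun j _ => hval j)
      _ = (-1 : ℂ) ^ (Finset.univ.filter (fun i : Fin n => Even (d i))).card := by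
          rw [Finset.prod_ite, Finset.prod_const, Finset.prod_const, one_pow, mul_one]
      _ = -1 := Odd.neg_one_pow hodd
  -- cast computations
  have hrevcast : ∀ j : Fin n, (((j.rev : Fin n) : ℕ) : F) = (n : F) - (j : ℕ) - 1 := by
    intro j
    rw [Fin.val_rev, Nat.cast_sub (by omega : (j : ℕ) + 1 ≤ n)]
    push_cast
    ring
  have hcast1 : (((n - 1 : ℕ)) : F) = (n : F) - 1 := by
    rw [Nat.cast_sub hn1, Nat.cast_one]
  -- the substitution g ↦ -(g + (n-1))
  set e : F ≃ F := (Equiv.addRight (((n - 1 : ℕ)) : F)).trans (Equiv.neg F) with he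
  have he' : ∀ h : F, e h = -(h + (((n - 1 : ℕ)) : F)) := fun h => rfl
  have hmain : ∀ h : F,
      (∏ k : Fin n, (χ k.rev) (e h + ((k : ℕ) : F)))
        = - ∏ k : Fin n, χ k (h + ((k : ℕ) : F)) := by
    intro h
    have step1 : (∏ k : Fin n, (χ k.rev) (e h + ((k : ℕ) : F)))
        = ∏ j : Fin n, χ j (e h + (((j.rev : Fin n) : ℕ) : F)) := by
      refine Fintype.prod_equiv Fin.revPerm _ _ (fun k => ?_)
      simp [Fin.revPerm, Fin.rev_rev]
    rw [step1]
    have step2 : ∀ j : Fin n, e h + (((j.rev : Fin n) : ℕ) : F) = -1 * (h + ((j : ℕ) : F)) := by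
      intro j
      rw [he' h, hrevcast j, hcast1]
      ring
    calc ∏ j : Fin n, χ j (e h + (((j.rev : Fin n) : ℕ) : F))
        = ∏ j : Fin n, ((χ j) (-1) * χ j (h + ((j : ℕ) : F))) :=
          Finset.prod_congr rfl (fun j _ => by rw [step2 j, map_mul])
      _ = (∏ j : Fin n, (χ j) (-1)) * ∏ j : Fin n, χ j (h + ((j : ℕ) : F)) :=
          Finset.prod_mul_distrib
      _ = - ∏ j : Fin n, χ j (h + ((j : ℕ) : F)) := by rw [hprod]; ring
  calc Schar (fun k => χ k.rev)
      = ∑ h : F, ∏ k : Fin n, (χ k.rev) (e h + ((k : ℕ) : F)) :=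
        (Equiv.sum_comp e (fun g => ∏ k : Fin n, (χ k.rev) (g + ((k : ℕ) : F)))).symm
    _ = ∑ h : F, - ∏ k : Fin n, χ k (h + ((k : ℕ) : F)) :=
        Finset.sum_congr rfl (fun h _ => hmain h)
    _ = - Schar χ := by rw [Finset.sum_neg_distrib]; rfl
end

section
/- Let q be a prime power of characteristic p, let n be an integer with 3 ≤ n ≤ p, let e be a divisor of q−1, and let p_1, …, p_s (s ≥ 1) be the distinct primes dividing q−1 but not e. For 1 ≤ i ≤ s and 1 ≤ j, k ≤ n define p_{ijk} = p_i if j = k and p_{ijk} = 1 otherwise. Then N_n(q−1) ≥ (Σ_{j=1}^{n} Σ_{i=1}^{s} N(p_{ij1}e, …, p_{ijn}e)) − (ns − 1) N_n(e). -/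
open Finset

/-- A nonzero element `g` is `e`-free if `g = h ^ d` with `d ∣ e` forces `d = 1`. -/
def EFree {F : Type*} [Field F] (e : ℕ) (g : F) : Prop :=
  g ≠ 0 ∧ ∀ (h : F) (d : ℕ), d ∣ e → g = h ^ d → d = 1

/-- `Ncount F n e` is the number `N(e₁, …, eₙ)` of `g ∈ F` such that `g + k - 1`
is `eₖ`-free for each `k = 1, …, n`. -/
noncomputable def Ncount (F : Type*) [Field F] (n : ℕ) (e : Fin n → ℕ) : ℕ :=
  Nat.card {g : F // ∀ k : Fin n, EFree (e k) (g + ((k : ℕ) : F))}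

/-- `Nn F n e = N(e, …, e)` counts `g ∈ F` with `g, g+1, …, g+n-1` all `e`-free. -/
noncomputable def Nn (F : Type*) [Field F] (n e : ℕ) : ℕ :=
  Ncount F n (fun _ => e)

/-- `θ(m) = ∏_{ℓ ∣ m, ℓ prime} (1 - 1/ℓ)`. -/
noncomputable def theta (m : ℕ) : ℝ :=
  ∏ l ∈ m.primeFactors, (1 - 1 / (l : ℝ))

/-- `W(m) = 2^{ω(m)}`, the number of squarefree divisors of `m`. -/
def W (m : ℕ) : ℕ := 2 ^ m.primeFactors.card


lemma efree_mono {F : Type*} [Field F] {a b : ℕ} (hab : a ∣ b) {g : F}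
    (h : EFree b g) : EFree a g :=
  ⟨h.1, fun h' d hd => h.2 h' d (hd.trans hab)⟩

/-- Sieving inequality: if `p₁, …, p_s` (with `s ≥ 1`) are the distinct primes dividing
`q-1` but not `e`, then
`N_n(q-1) ≥ (∑_{j=1}^n ∑_{i=1}^s N(p_{ij1}e, …, p_{ijn}e)) - (ns - 1) N_n(e)`,
where `p_{ijk} = pᵢ` if `j = k` and `p_{ijk} = 1` otherwise. -/
theorem sieve_inequality (q c n s : ℕ) (hq : IsPrimePow q)
    (F : Type*) [Field F] [Fintype F] (hF : Fintype.card F = q) (hc : CharP F c)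
    (hn3 : 3 ≤ n) (hnc : n ≤ c) (e : ℕ) (he : e ∣ q - 1) (hs : 1 ≤ s)
    (p : Fin s → ℕ) (hprime : ∀ i, (p i).Prime) (hdvd : ∀ i, p i ∣ q - 1)
    (hnot : ∀ i, ¬ p i ∣ e) (hinj : Function.Injective p)
    (hall : ∀ r : ℕ, r.Prime → r ∣ q - 1 → ¬ r ∣ e → ∃ i, p i = r) :
    (∑ j : Fin n, ∑ i : Fin s,
        (Ncount F n (fun k => (if j = k then p i else 1) * e) : ℤ))
      - ((n : ℤ) * s - 1) * (Nn F n e : ℤ) ≤ (Nn F n (q - 1) : ℤ) := by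
  classical
  have hq2 : 2 ≤ q := hq.two_le
  have hq1 : 1 ≤ q - 1 := by omega
  set T : Finset F := univ.filter
    (fun g => ∀ k : Fin n, EFree (q - 1) (g + ((k : ℕ) : F))) with hTdef
  set S : Finset F := univ.filter
    (fun g => ∀ k : Fin n, EFree e (g + ((k : ℕ) : F))) with hSdef
  set A : Fin n → Fin s → Finset F := fun j i => univ.filter
    (fun g => ∀ k : Fin n, EFree ((if j = k then p i else 1) * e) (g + ((k : ℕ) : F))) with hAdef
  have hcard : ∀ (e' : Fin n → ℕ),
      Ncount F n e' =
        (univ.filter (fun g : F => ∀ k : Fin n, EFree (e' k) (g + ((k : ℕ) : F)))).card := by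
    intro e'
    rw [Ncount, Nat.card_eq_fintype_card]
    convert Fintype.card_subtype _
  have hSc : Nn F n e = S.card := hcard _
  have hTc : Nn F n (q - 1) = T.card := hcard _
  have hAc : ∀ j i, Ncount F n (fun k => (if j = k then p i else 1) * e) = (A j i).card :=
    fun j i => hcard _
  have hpe : ∀ i, p i * e ∣ q - 1 := fun i =>
    Nat.Coprime.mul_dvd_of_dvd_of_dvd (((hprime i).coprime_iff_not_dvd).mpr (hnot i))
      (hdvd i) he
  have hTS : T ⊆ S := by
    intro g hg
    rw [hSdef, mem_filter]
    rw [hTdef, mem_filter] at hg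
    exact ⟨mem_univ _, fun k => efree_mono he (hg.2 k)⟩
  have hAS : ∀ j i, A j i ⊆ S := by
    intro j i g hg
    rw [hSdef, mem_filter]
    rw [hAdef, mem_filter] at hg
    exact ⟨mem_univ _, fun k => efree_mono (dvd_mul_left e _) (hg.2 k)⟩
  have hTA : ∀ g ∈ T, ∀ j i, g ∈ A j i := by
    intro g hg j i
    rw [hTdef, mem_filter] at hg
    rw [hAdef, mem_filter]
    refine ⟨mem_univ _, fun k => efree_mono ?_ (hg.2 k)⟩
    by_cases h : j = k
    · simpa [h] using hpe i
    · simpa [h] using he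
  have hnotT : ∀ g ∈ S, g ∉ T → ∃ j i, g ∉ A j i := by
    intro g hgS hgT
    rw [hSdef, mem_filter] at hgS
    rw [hTdef, mem_filter, not_and] at hgT
    have := hgT (mem_univ _)
    push_neg at this
    obtain ⟨k, hk⟩ := this
    rw [EFree, not_and] at hk
    have hk' := hk (hgS.2 k).1
    push_neg at hk'
    obtain ⟨h, d, hdq, hgd, hd1⟩ := hk'
    obtain ⟨r, hr, hrd⟩ := Nat.exists_prime_and_dvd hd1
    have hpow : g + ((k : ℕ) : F) = (h ^ (d / r)) ^ r := by
      rw [← pow_mul, Nat.div_mul_cancel hrd]; exact hgd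
    have hre : ¬ r ∣ e := by
      intro hre
      exact hr.one_lt.ne' ((hgS.2 k).2 (h ^ (d / r)) r hre hpow)
    obtain ⟨i, hi⟩ := hall r hr (hrd.trans hdq) hre
    refine ⟨k, i, fun hA => ?_⟩
    rw [hAdef, mem_filter] at hA
    have := (hA.2 k).2 (h ^ (d / r)) r (by rw [if_pos rfl, hi]; exact Dvd.intro e rfl) hpow
    exact hr.one_lt.ne' this
  -- counting
  set cnt : F → ℕ := fun g =>
    ((univ : Finset (Fin n × Fin s)).filter (fun ji => g ∈ A ji.1 ji.2)).card with hcnt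
  have hAfil : ∀ j i, S.filter (fun g => g ∈ A j i) = A j i := by
    intro j i
    rw [filter_mem_eq_inter, inter_eq_right]
    exact hAS j i
  have hsum : ∑ j : Fin n, ∑ i : Fin s, (A j i).card = ∑ g ∈ S, cnt g := by
    have : ∑ j : Fin n, ∑ i : Fin s, (A j i).card
        = ∑ ji : Fin n × Fin s, (S.filter (fun g => g ∈ A ji.1 ji.2)).card := by
      rw [Fintype.sum_prod_type]
      exact Finset.sum_congr rfl fun j _ => Finset.sum_congr rfl fun i _ => (hAfil j i).symm ▸ rfl
    rw [this]
    simp only [card_filter]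
    rw [Finset.sum_comm]
    refine Finset.sum_congr rfl fun g _ => ?_
    rw [hcnt]
    exact (Finset.card_filter _ _).symm
  have hcT : ∀ g ∈ T, cnt g = n * s := by
    intro g hg
    rw [hcnt]
    simp only
    rw [filter_true_of_mem (fun ji _ => hTA g hg ji.1 ji.2), card_univ]
    simp
  have hcST : ∀ g ∈ S \ T, cnt g ≤ n * s - 1 := by
    intro g hg
    rw [mem_sdiff] at hg
    obtain ⟨j, i, hji⟩ := hnotT g hg.1 hg.2
    have hlt : cnt g < n * s := by
      have h1 : (univ.filter (fun ji : Fin n × Fin s => g ∈ A ji.1 ji.2)) ⊂ univ :=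
        Finset.filter_ssubset.mpr ⟨(j, i), mem_univ _, hji⟩
      have := Finset.card_lt_card h1
      simpa [hcnt, card_univ] using this
    omega
  have h1 : ∑ g ∈ S \ T, cnt g ≤ (S \ T).card * (n * s - 1) := by
    calc ∑ g ∈ S \ T, cnt g ≤ ∑ _g ∈ S \ T, (n * s - 1) := Finset.sum_le_sum hcST
    _ = (S \ T).card * (n * s - 1) := by rw [Finset.sum_const, smul_eq_mul]
  have h2 : ∑ g ∈ T, cnt g = T.card * (n * s) := by
    calc ∑ g ∈ T, cnt g = ∑ _g ∈ T, (n * s) := Finset.sum_congr rfl hcT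
    _ = T.card * (n * s) := by rw [Finset.sum_const, smul_eq_mul]
  have hsplit : ∑ g ∈ S \ T, cnt g + ∑ g ∈ T, cnt g = ∑ g ∈ S, cnt g :=
    Finset.sum_sdiff hTS
  have hsd : (S \ T).card = S.card - T.card := card_sdiff_of_subset hTS
  have hTleS : T.card ≤ S.card := Finset.card_le_card hTS
  have hns : 1 ≤ n * s := by simpa using Nat.mul_le_mul (show 1 ≤ n by omega) hs
  -- total bound in ℕ
  have key : ∑ j : Fin n, ∑ i : Fin s, (A j i).card
      ≤ (S.card - T.card) * (n * s - 1) + T.card * (n * s) := by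
    rw [hsum, ← hsplit, ← hsd]
    omega
  -- conclude in ℤ
  rw [hSc, hTc]
  have hcastA : ∀ j i, (Ncount F n (fun k => (if j = k then p i else 1) * e) : ℤ)
      = ((A j i).card : ℤ) := fun j i => by rw [hAc j i]
  simp only [hcastA]
  have keyZ : (∑ j : Fin n, ∑ i : Fin s, ((A j i).card : ℤ))
      ≤ ((S.card : ℤ) - T.card) * ((n : ℤ) * s - 1) + (T.card : ℤ) * ((n : ℤ) * s) := by
    have := (Nat.cast_le (α := ℤ)).mpr key
    push_cast [Nat.cast_sub hTleS, Nat.cast_sub hns] at this ⊢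
    convert this using 2 <;> push_cast <;> ring
  have hns1 : (0 : ℤ) ≤ (n : ℤ) * s - 1 := by
    have : (1 : ℤ) ≤ (n : ℤ) * s := by exact_mod_cast hns
    linarith
  nlinarith [keyZ, (Nat.cast_le (α := ℤ)).mpr hTleS]
end
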